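/- Let f : B₁ ⊂ ℝ^{n+1} → ℝ belong to C^{k,α}_{xr}(Γ ∩ B₁) with norm ≤ M, and let P_0, P_Z be its tangent polynomials (in the variables (x,r)) at 0 ∈ Γ and at Z ∈ Γ with |Z| = λ. Then ‖P₀ − P_Z‖_{L^∞(B_{2λ})} ≤ Cλ^{k+α}, and the coefficients of the degree-m parts of P₀ and P_Z differ by at most C|Z|^{k−m+α}, with C depending only on n, k, α, M. -/

import Mathlib

open Metric Finset

/-- In `ℝ^{n+1}` (with `n = m+1`): the index of the coordinate `xₙ`. -/
def idxn (m : ℕ) : Fin (m + 2) := (Fin.last m).castSucc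

/-- The index of the coordinate `x_{n+1}`. -/
def idxlast (m : ℕ) : Fin (m + 2) := Fin.last (m + 1)

/-- The boundary `Γ = {(x', g(x'))} ⊂ ℝⁿ` of the slit, embedded in `ℝ^{n+1}`
as `Γ × {0}`. -/
def GammaE (m : ℕ) (g : EuclideanSpace ℝ (Fin m) → ℝ) :
    Set (EuclideanSpace ℝ (Fin (m + 2))) :=
  {X | X (idxlast m) = 0 ∧ X (idxn m) = g (WithLp.toLp 2 (fun i : Fin m => X (i.castSucc.castSucc)))}

/-- `r(X)`: the distance in `ℝ^{n+1}` from `X` to `Γ`. -/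
noncomputable def rGamma (m : ℕ) (g : EuclideanSpace ℝ (Fin m) → ℝ)
    (X : EuclideanSpace ℝ (Fin (m + 2))) : ℝ := infDist X (GammaE m g)

/-- The value at `X` of the polynomial in `(x, r)` (degree `≤ k`) with coefficients `a`. -/
noncomputable def polyVal (m k : ℕ) (g : EuclideanSpace ℝ (Fin m) → ℝ)
    (a : (Fin (m + 1) → ℕ) → ℕ → ℝ)
    (X : EuclideanSpace ℝ (Fin (m + 2))) : ℝ :=
  ∑ μ : Fin (m + 1) → Fin (k + 1), ∑ j ∈ range (k + 1),
    a (fun i => (μ i : ℕ)) j *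
      (∏ i : Fin (m + 1), (X i.castSucc) ^ ((μ i : ℕ))) * (rGamma m g X) ^ j

section Aux

lemma grid_poly_eq_zero : ∀ (N : ℕ) {K : ℕ} (v : Fin N → Fin (K+1) → ℝ)
    (_hv : ∀ i, Function.Injective (v i)) (c : (Fin N → Fin (K+1)) → ℝ)
    (_h : ∀ σ : Fin N → Fin (K+1),
      ∑ ν : Fin N → Fin (K+1), c ν * ∏ i, (v i (σ i)) ^ (ν i : ℕ) = 0),
    c = 0 := by
  intro N
  induction N with
  | zero =>
    intro K v hv c h
    funext ν
    have h0 := h ν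
    simp at h0
    convert h0 using 2
    rfl
  | succ N ih =>
    intro K v hv c h
    have key : ∀ (σ' : Fin N → Fin (K+1)) (j : Fin (K+1)),
        ∑ ν' : Fin N → Fin (K+1), c (Fin.snoc ν' j) *
          ∏ i, (v i.castSucc (σ' i)) ^ ((ν' i : ℕ)) = 0 := by
      intro σ' j
      set d : Fin (K+1) → ℝ := fun j => ∑ ν' : Fin N → Fin (K+1), c (Fin.snoc ν' j) *
          ∏ i, (v i.castSucc (σ' i)) ^ ((ν' i : ℕ)) with hd
      have heval : ∀ t : Fin (K+1), ∑ j : Fin (K+1), d j * (v (Fin.last N) t) ^ (j : ℕ) = 0 := by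
        intro t
        have h1 := h (Fin.snoc σ' t)
        have h1' : ∑ pr : Fin (K+1) × (Fin N → Fin (K+1)),
            c (Fin.snoc pr.2 pr.1) * ∏ i : Fin (N+1),
              (v i ((Fin.snoc σ' t : Fin (N+1) → Fin (K+1)) i)) ^
                (((Fin.snoc pr.2 pr.1 : Fin (N+1) → Fin (K+1)) i : ℕ)) = 0 := by
          rw [Fintype.sum_equiv (Fin.snocEquiv (fun _ => Fin (K+1)))
            _ (fun ν => c ν * ∏ i : Fin (N+1),
              (v i ((Fin.snoc σ' t : Fin (N+1) → Fin (K+1)) i)) ^ ((ν i : ℕ)))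
            (fun pr => by simp [Fin.snocEquiv])]
          exact h1
        rw [Fintype.sum_prod_type] at h1'
        rw [← h1']
        refine Finset.sum_congr rfl fun j _ => ?_
        rw [hd, Finset.sum_mul]
        refine Finset.sum_congr rfl fun ν' _ => ?_
        rw [Fin.prod_univ_castSucc]
        simp only [Fin.snoc_castSucc, Fin.snoc_last]
        ring
      set p : Polynomial ℝ := ∑ j : Fin (K+1), Polynomial.C (d j) * Polynomial.X ^ (j : ℕ) with hp
      have hpz : p = 0 := by
        apply Polynomial.eq_zero_of_natDegree_lt_card_of_eval_eq_zero p (hv (Fin.last N))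
        · intro t
          rw [hp]
          simp only [Polynomial.eval_finset_sum, Polynomial.eval_mul, Polynomial.eval_C,
            Polynomial.eval_pow, Polynomial.eval_X]
          exact heval t
        · refine lt_of_le_of_lt (Polynomial.natDegree_sum_le_of_forall_le (n := K) _ _
            fun j _ => ?_) ?_
          · exact (Polynomial.natDegree_C_mul_X_pow_le (d j) (j : ℕ)).trans (Nat.lt_succ_iff.mp j.2)
          · simp [Fintype.card_fin]
      have hdj : d j = 0 := by
        have hc : p.coeff (j : ℕ) = d j := by
          rw [hp, Polynomial.finset_sum_coeff]
          rw [Finset.sum_eq_single j]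
          · simp
          · intro b _ hbj
            simp only [Polynomial.coeff_C_mul, Polynomial.coeff_X_pow]
            rw [if_neg (by exact fun hh => hbj (Fin.ext hh.symm))]
            ring
          · simp
        rw [← hc, hpz]; simp
      rw [← hdj]
    funext ν
    have h2 : (fun ν' => c (Fin.snoc ν' (ν (Fin.last N)))) = 0 :=
      ih (fun i => v i.castSucc) (fun i => hv i.castSucc)
        (fun ν' => c (Fin.snoc ν' (ν (Fin.last N)))) (fun σ' => key σ' (ν (Fin.last N)))
    have h3 := congrFun h2 (Fin.init ν)
    rw [Fin.snoc_init_self] at h3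
    simpa using h3

lemma exists_norm_le_of_injective {V W : Type*} [NormedAddCommGroup V] [NormedSpace ℝ V]
    [NormedAddCommGroup W] [NormedSpace ℝ W] [FiniteDimensional ℝ V]
    (T : V →ₗ[ℝ] W) (hT : Function.Injective T) :
    ∃ C > 0, ∀ v, ‖v‖ ≤ C * ‖T v‖ := by
  let e := LinearEquiv.ofInjective T hT
  haveI : FiniteDimensional ℝ (LinearMap.range T) := e.finiteDimensional
  let f : LinearMap.range T →L[ℝ] V := LinearMap.toContinuousLinearMap e.symm.toLinearMap
  refine ⟨‖f‖ + 1, by positivity, fun v => ?_⟩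
  have hv : v = f ⟨T v, LinearMap.mem_range_self T v⟩ := by
    have : (⟨T v, LinearMap.mem_range_self T v⟩ : LinearMap.range T) = e v := rfl
    rw [this]
    simp [f, e]
  calc ‖v‖ = ‖f ⟨T v, LinearMap.mem_range_self T v⟩‖ := by rw [← hv]
    _ ≤ ‖f‖ * ‖(⟨T v, LinearMap.mem_range_self T v⟩ : LinearMap.range T)‖ := f.le_opNorm _
    _ = ‖f‖ * ‖T v‖ := rfl
    _ ≤ (‖f‖ + 1) * ‖T v‖ := by
        have := norm_nonneg (T v)
        nlinarith [norm_nonneg f]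

lemma coord_le_dist' {n : ℕ} (X Y : EuclideanSpace ℝ (Fin n)) (i : Fin n) :
    |X i - Y i| ≤ dist X Y := by
  rw [EuclideanSpace.dist_eq]
  have h1 : |X i - Y i| = Real.sqrt ((dist (X i) (Y i))^2) := by
    rw [Real.sqrt_sq_eq_abs, Real.dist_eq, abs_abs]
  rw [h1]
  apply Real.sqrt_le_sqrt
  exact Finset.single_le_sum (f := fun i => dist (X i) (Y i) ^ 2)
    (fun j _ => sq_nonneg _) (Finset.mem_univ i)

lemma lipschitz_of_deriv_le {n : ℕ} {g : EuclideanSpace ℝ (Fin n) → ℝ} {κ : ℕ}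
    (hg : ContDiff ℝ (↑(κ + 2)) g) (hg0 : g 0 = 0)
    (hd : ∀ j ≤ κ + 2, ∀ y, ‖iteratedFDeriv ℝ j g y‖ ≤ 1)
    (w : EuclideanSpace ℝ (Fin n)) : |g w| ≤ ‖w‖ := by
  have hdiff : ∀ x ∈ (Set.univ : Set (EuclideanSpace ℝ (Fin n))), DifferentiableAt ℝ g x := by
    intro x _
    exact (hg.differentiable (by norm_num)).differentiableAt
  have hbound : ∀ x ∈ (Set.univ : Set (EuclideanSpace ℝ (Fin n))), ‖fderiv ℝ g x‖ ≤ 1 := by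
    intro x _
    have h1 : ‖fderiv ℝ g x‖ = ‖iteratedFDeriv ℝ 1 g x‖ := by
      rw [← norm_iteratedFDeriv_fderiv, norm_iteratedFDeriv_zero]
    rw [h1]
    exact hd 1 (by omega) x
  have := convex_univ.norm_image_sub_le_of_norm_fderiv_le hdiff hbound
    (Set.mem_univ 0) (Set.mem_univ w)
  simpa [hg0] using this

lemma zero_mem_GammaE (m : ℕ) (g : EuclideanSpace ℝ (Fin m) → ℝ) (hg0 : g 0 = 0) :
    (0 : EuclideanSpace ℝ (Fin (m + 2))) ∈ GammaE m g := by
  constructor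
  · rfl
  · have h : WithLp.toLp 2 (fun i : Fin m => (0 : EuclideanSpace ℝ (Fin (m+2))) (i.castSucc.castSucc))
        = (0 : EuclideanSpace ℝ (Fin m)) := rfl
    rw [h, hg0]
    rfl

lemma rGamma_ge (m : ℕ) (g : EuclideanSpace ℝ (Fin m) → ℝ) (hg0 : g 0 = 0)
    (X : EuclideanSpace ℝ (Fin (m + 2))) :
    |X (idxlast m)| ≤ rGamma m g X := by
  have hne : (GammaE m g).Nonempty := ⟨0, zero_mem_GammaE m g hg0⟩
  haveI : Nonempty ↥(GammaE m g) := hne.to_subtype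
  rw [rGamma, Metric.infDist_eq_iInf]
  refine le_ciInf fun Y => ?_
  have h := coord_le_dist' X Y (idxlast m)
  rwa [Y.2.1, sub_zero] at h

lemma rpow_base_aux (l a c : ℝ) (k : ℕ) (α : ℝ) (hl : 0 < l) (hα0 : 0 < α) (hα1 : α < 1)
    (ha : 0 ≤ a) (hc : 1 ≤ c) (hab : a ≤ c * l) :
    a ^ ((k:ℝ)+α) ≤ c^(k+1) * l ^ ((k:ℝ)+α) := by
  have h1 : a ^ ((k:ℝ)+α) ≤ (c*l) ^ ((k:ℝ)+α) :=
    Real.rpow_le_rpow ha hab (by positivity)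
  have h2 : (c*l) ^ ((k:ℝ)+α) = c^((k:ℝ)+α) * l ^ ((k:ℝ)+α) :=
    Real.mul_rpow (by linarith) hl.le
  have h3 : c^((k:ℝ)+α) ≤ c^((k:ℝ)+1) :=
    Real.rpow_le_rpow_of_exponent_le hc (by linarith)
  have h4 : c^((k:ℝ)+1) = c^(k+1) := by
    rw [← Real.rpow_natCast c (k+1)]; push_cast; ring_nf
  nlinarith [Real.rpow_nonneg hl.le ((k:ℝ)+α), Real.rpow_nonneg (by linarith : (0:ℝ) ≤ c) ((k:ℝ)+α)]

end Aux

set_option maxHeartbeats 2000000 in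
/-- Tangent-polynomial comparison for `f ∈ C^{k,α}_{xr}(Γ ∩ B₁)`: if `P₀`, `P_Z` are the
tangent polynomials of `f` at `0 ∈ Γ` and at `Z ∈ Γ` with `|Z| = λ`, then
`‖P₀ - P_Z‖_{L∞(B_{2λ})} ≤ C λ^{k+α}`, and the coefficients of the degree-`d` parts of
`P₀` and `P_Z` differ by at most `C|Z|^{k-d+α}`, with `C = C(n,k,α,M)`. -/
theorem tangent_polynomial_comparison (m k : ℕ) (α M : ℝ)
    (hα0 : 0 < α) (hα1 : α < 1) (hM : 0 < M) :
    ∃ C > (0 : ℝ),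
      ∀ g : EuclideanSpace ℝ (Fin m) → ℝ,
        ContDiff ℝ (↑(k + 2)) g → g 0 = 0 → gradient g 0 = 0 →
        (∀ j ≤ k + 2, ∀ y, ‖iteratedFDeriv ℝ j g y‖ ≤ 1) →
        HolderWith 1 α.toNNReal (iteratedFDeriv ℝ (k + 2) g) →
      ∀ f : EuclideanSpace ℝ (Fin (m + 2)) → ℝ,
      ∀ Z ∈ GammaE m g, 0 < ‖Z‖ → ‖Z‖ ≤ 1 / 4 →
      ∀ a0 aZ : (Fin (m + 1) → ℕ) → ℕ → ℝ,
        (∀ μ j, k < (∑ i, μ i) + j → a0 μ j = 0) →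
        (∀ μ j, k < (∑ i, μ i) + j → aZ μ j = 0) →
        (∀ μ j, |a0 μ j| ≤ M) → (∀ μ j, |aZ μ j| ≤ M) →
        (∀ X ∈ ball (0 : EuclideanSpace ℝ (Fin (m + 2))) 1,
          |f X - polyVal m k g a0 X| ≤ M * ‖X‖ ^ ((k : ℝ) + α)) →
        (∀ X ∈ ball (0 : EuclideanSpace ℝ (Fin (m + 2))) 1,
          |f X - polyVal m k g aZ X| ≤ M * ‖X - Z‖ ^ ((k : ℝ) + α)) →
        (∀ X ∈ ball (0 : EuclideanSpace ℝ (Fin (m + 2))) (2 * ‖Z‖),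
          |polyVal m k g a0 X - polyVal m k g aZ X| ≤ C * ‖Z‖ ^ ((k : ℝ) + α)) ∧
        (∀ μ : Fin (m + 1) → ℕ, ∀ j : ℕ, (∑ i, μ i) + j ≤ k →
          |a0 μ j - aZ μ j| ≤ C * ‖Z‖ ^ ((k : ℝ) - ((∑ i, μ i : ℕ) + j : ℕ) + α)) := by
  classical
  -- the fixed grid
  set β : ℝ := 1/(4*(m+1)) with hβ
  have hβ0 : 0 < β := by positivity
  have hβeq : ((m:ℝ)+1) * β = 1/4 := by rw [hβ]; field_simp
  have hβle : β ≤ 1/4 := by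
    rw [hβ, div_le_div_iff₀ (by positivity) (by norm_num)]
    nlinarith [Nat.cast_nonneg (α := ℝ) m]
  set lo : Fin (m+2) → ℝ := fun i => if i = Fin.last (m+1) then 1 else 0 with hlo
  set hi : Fin (m+2) → ℝ := fun i => if i = Fin.last (m+1) then 3/2 else β with hhi
  have hDpos : ∀ i, 0 < hi i - lo i := by
    intro i
    by_cases h : i = Fin.last (m+1) <;> simp [hlo, hhi, h] <;> linarith
  set v : Fin (m+2) → Fin (k+1) → ℝ := fun i t => lo i + (hi i - lo i) * t / (k+1) with hv
  have hvinj : ∀ i, Function.Injective (v i) := by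
    intro i t s h
    have h2 : ((t:ℕ):ℝ) = ((s:ℕ):ℝ) := by
      have h' : (hi i - lo i) * (t:ℝ) / (k+1) = (hi i - lo i) * (s:ℝ) / (k+1) := by
        simpa [hv] using h
      field_simp at h'
      have h'' := mul_left_cancel₀ (hDpos i).ne' h'
      linarith
    exact Fin.ext (by exact_mod_cast h2)
  have hvmem : ∀ i t, lo i ≤ v i t ∧ v i t ≤ hi i := by
    intro i t
    have hk1 : (0:ℝ) < (k:ℝ)+1 := by positivity
    have ht0 : (0:ℝ) ≤ ((t:ℕ):ℝ) := Nat.cast_nonneg _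
    have ht1 : ((t:ℕ):ℝ) ≤ (k:ℝ)+1 := by
      have h := t.2
      have h2 : ((t:ℕ):ℝ) < (k:ℝ)+1 := by exact_mod_cast h
      linarith
    have hD := (hDpos i).le
    constructor
    · have h3 : 0 ≤ (hi i - lo i) * ((t:ℕ):ℝ) / ((k:ℝ)+1) := by positivity
      simp only [hv]
      linarith
    · have h3 : (hi i - lo i) * ((t:ℕ):ℝ) / ((k:ℝ)+1) ≤ hi i - lo i := by
        rw [div_le_iff₀ hk1]
        nlinarith
      simp only [hv]
      linarith
  -- the evaluation linear map on coefficient space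
  set T : ((Fin (m+2) → Fin (k+1)) → ℝ) →ₗ[ℝ] ((Fin (m+2) → Fin (k+1)) → ℝ) :=
    { toFun := fun c σ => ∑ ν : Fin (m+2) → Fin (k+1), c ν * ∏ i, (v i (σ i)) ^ ((ν i : ℕ)),
      map_add' := by
        intro c1 c2
        funext σ
        simp [add_mul, Finset.sum_add_distrib]
      map_smul' := by
        intro r c1
        funext σ
        simp [Finset.mul_sum, mul_assoc] } with hT
  have hTinj : Function.Injective T := by
    intro c1 c2 hcc
    have h0 : T (c1 - c2) = 0 := by rw [map_sub, hcc, sub_self]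
    have h1 : c1 - c2 = 0 := by
      refine grid_poly_eq_zero (m+2) v hvinj (c1 - c2) fun σ => ?_
      have := congrFun h0 σ
      simpa [hT, sub_mul, Finset.sum_sub_distrib] using this
    exact sub_eq_zero.mp h1
  obtain ⟨C₂, hC₂0, hC₂⟩ := exists_norm_le_of_injective T hTinj
  set C₁ : ℝ := M * (2^(k+1) + 3^(k+1)) with hC₁def
  have hC₁ : 0 < C₁ := by positivity
  refine ⟨C₁ + C₂ * C₁, by nlinarith, ?_⟩
  intro g hg hg0 hgrad hd hHold f Z hZΓ hZ0 hZ4 a0 aZ ha0deg haZdeg ha0M haZM happ0 happZ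
  set l : ℝ := ‖Z‖ with hl
  have hl2 : 2 * l ≤ 1/2 := by linarith
  have hek : (0:ℝ) < (k:ℝ) + α := by positivity
  have hlkα : 0 < l ^ ((k:ℝ)+α) := Real.rpow_pos_of_pos hZ0 _
  -- part 1 core estimate
  have hkey : ∀ X : EuclideanSpace ℝ (Fin (m+2)), ‖X‖ < 2*l →
      |polyVal m k g a0 X - polyVal m k g aZ X| ≤ C₁ * l ^ ((k:ℝ)+α) := by
    intro X hX
    have hX1 : X ∈ ball (0 : EuclideanSpace ℝ (Fin (m+2))) 1 := by
      rw [mem_ball_zero_iff]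
      linarith
    have h1 := happ0 X hX1
    have h2 := happZ X hX1
    have hXZ : ‖X - Z‖ ≤ 3 * l := by
      calc ‖X - Z‖ ≤ ‖X‖ + ‖Z‖ := norm_sub_le X Z
        _ ≤ 3 * l := by linarith
    have hb1 : ‖X‖ ^ ((k:ℝ)+α) ≤ 2^(k+1) * l ^ ((k:ℝ)+α) :=
      rpow_base_aux l ‖X‖ 2 k α hZ0 hα0 hα1 (norm_nonneg _) (by norm_num) (by linarith)
    have hb2 : ‖X - Z‖ ^ ((k:ℝ)+α) ≤ 3^(k+1) * l ^ ((k:ℝ)+α) :=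
      rpow_base_aux l ‖X - Z‖ 3 k α hZ0 hα0 hα1 (norm_nonneg _) (by norm_num) hXZ
    calc |polyVal m k g a0 X - polyVal m k g aZ X|
        = |(f X - polyVal m k g aZ X) - (f X - polyVal m k g a0 X)| := by ring_nf
      _ ≤ |f X - polyVal m k g aZ X| + |f X - polyVal m k g a0 X| := abs_sub _ _
      _ ≤ M * ‖X - Z‖ ^ ((k:ℝ)+α) + M * ‖X‖ ^ ((k:ℝ)+α) := by linarith
      _ ≤ C₁ * l ^ ((k:ℝ)+α) := by
          rw [hC₁def]
          nlinarith
  constructor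
  · intro X hX
    rw [mem_ball_zero_iff] at hX
    calc |polyVal m k g a0 X - polyVal m k g aZ X| ≤ C₁ * l ^ ((k:ℝ)+α) := hkey X hX
      _ ≤ (C₁ + C₂ * C₁) * l ^ ((k:ℝ)+α) := by nlinarith [mul_pos (mul_pos hC₂0 hC₁) hlkα]
  -- part 2
  · set cc : (Fin (m+2) → Fin (k+1)) → ℝ := fun ν =>
      (a0 (fun i => (ν i.castSucc : ℕ)) (ν (Fin.last (m+1)) : ℕ)
        - aZ (fun i => (ν i.castSucc : ℕ)) (ν (Fin.last (m+1)) : ℕ)) * l ^ (∑ i, (ν i : ℕ))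
      with hccdef
    have hΓ0 : (0 : EuclideanSpace ℝ (Fin (m+2))) ∈ GammaE m g := zero_mem_GammaE m g hg0
    have hTσ : ∀ σ : Fin (m+2) → Fin (k+1), |(T cc) σ| ≤ C₁ * l ^ ((k:ℝ)+α) := by
      intro σ
      set y : Fin (m+2) → ℝ := fun i => v i (σ i) with hy
      have hylast1 : 1 ≤ y (Fin.last (m+1)) := by
        have h := (hvmem (Fin.last (m+1)) (σ (Fin.last (m+1)))).1
        simpa [hlo, hy] using h
      have hylast2 : y (Fin.last (m+1)) ≤ 3/2 := by
        have h := (hvmem (Fin.last (m+1)) (σ (Fin.last (m+1)))).2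
        simpa [hhi, hy] using h
      have hyns : ∀ i : Fin (m+1), 0 ≤ y i.castSucc ∧ y i.castSucc ≤ β := by
        intro i
        have hne : (i.castSucc : Fin (m+2)) ≠ Fin.last (m+1) := (Fin.castSucc_lt_last i).ne
        constructor
        · have h := (hvmem i.castSucc (σ i.castSucc)).1
          simpa [hlo, hy, if_neg hne] using h
        · have h := (hvmem i.castSucc (σ i.castSucc)).2
          simpa [hhi, hy, if_neg hne] using h
      set xc : Fin (m+1) → ℝ := fun i => l * y i.castSucc with hxc
      have hxc0 : ∀ i, 0 ≤ xc i := fun i => mul_nonneg hZ0.le (hyns i).1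
      have hxcβ : ∀ i, xc i ≤ l * β := fun i => mul_le_mul_of_nonneg_left (hyns i).2 hZ0.le
      set Xt : ℝ → EuclideanSpace ℝ (Fin (m+2)) := fun t => WithLp.toLp 2 (Fin.snoc xc t : Fin (m+2) → ℝ)
        with hXt
      have hXtcont : Continuous Xt := by
        have hsnoc : Continuous fun t : ℝ => (Fin.snoc xc t : Fin (m+2) → ℝ) := by
          apply continuous_pi
          intro i
          refine Fin.lastCases ?_ ?_ i
          · simpa [Fin.snoc_last] using continuous_id'
          · intro j; simpa [Fin.snoc_castSucc] using continuous_const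
        exact (PiLp.continuousLinearEquiv 2 ℝ (fun _ : Fin (m+2) => ℝ)).symm.continuous.comp hsnoc
      have hXtlast : ∀ t, Xt t (Fin.last (m+1)) = t := fun t => by
        simp [hXt, Fin.snoc_last]
      have hXtcs : ∀ (t : ℝ) (i : Fin (m+1)), Xt t i.castSucc = xc i := fun t i => by
        simp [hXt, Fin.snoc_castSucc]
      set ρ : ℝ → ℝ := fun t => rGamma m g (Xt t) with hρ
      have hρcont : Continuous ρ := (continuous_infDist_pt _).comp hXtcont
      have hρlow : ∀ t, 0 ≤ t → t ≤ ρ t := by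
        intro t ht
        have h := rGamma_ge m g hg0 (Xt t)
        unfold idxlast at h
        rw [hXtlast t] at h
        calc t ≤ |t| := le_abs_self t
          _ ≤ ρ t := h
      have hρ0 : ρ 0 ≤ l/2 := by
        set w : EuclideanSpace ℝ (Fin m) := WithLp.toLp 2 (fun i => xc i.castSucc : Fin m → ℝ) with hw
        set Y : EuclideanSpace ℝ (Fin (m+2)) :=
          WithLp.toLp 2 (Fin.snoc (Fin.snoc (fun i => xc i.castSucc) (g w) : Fin (m+1) → ℝ) 0
            : Fin (m+2) → ℝ) with hY
        have hYcs : ∀ i : Fin m, Y (i.castSucc.castSucc) = xc i.castSucc := by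
          intro i
          show (Fin.snoc (Fin.snoc (fun i => xc i.castSucc) (g w) : Fin (m+1) → ℝ) 0
            : Fin (m+2) → ℝ) (i.castSucc.castSucc) = _
          rw [Fin.snoc_castSucc, Fin.snoc_castSucc]
        have hYn : Y ((Fin.last m).castSucc) = g w := by
          show (Fin.snoc (Fin.snoc (fun i => xc i.castSucc) (g w) : Fin (m+1) → ℝ) 0
            : Fin (m+2) → ℝ) ((Fin.last m).castSucc) = _
          rw [Fin.snoc_castSucc, Fin.snoc_last]
        have hYlast : Y (Fin.last (m+1)) = 0 := by
          show (Fin.snoc (Fin.snoc (fun i => xc i.castSucc) (g w) : Fin (m+1) → ℝ) 0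
            : Fin (m+2) → ℝ) (Fin.last (m+1)) = _
          rw [Fin.snoc_last]
        have hYmem : Y ∈ GammaE m g := by
          refine ⟨hYlast, ?_⟩
          have h2 : WithLp.toLp 2 (fun i : Fin m => Y (i.castSucc.castSucc)) = w := by
            rw [hw]; congr 1; funext i; exact hYcs i
          show Y ((Fin.last m).castSucc) = _
          rw [hYn, h2]
        have hdist : dist (Xt 0) Y = |xc (Fin.last m) - g w| := by
          rw [EuclideanSpace.dist_eq, Fin.sum_univ_castSucc, Fin.sum_univ_castSucc]
          have e1 : ∀ i : Fin m, dist (Xt 0 (i.castSucc.castSucc)) (Y (i.castSucc.castSucc)) = 0 := by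
            intro i
            rw [hYcs i, hXtcs 0 i.castSucc, dist_self]
          have e2 : dist (Xt 0 ((Fin.last m).castSucc)) (Y ((Fin.last m).castSucc))
              = |xc (Fin.last m) - g w| := by
            rw [hYn, hXtcs 0 (Fin.last m), Real.dist_eq]
          have e4 : dist (Xt 0 (Fin.last (m+1))) (Y (Fin.last (m+1))) = 0 := by
            rw [hYlast, hXtlast 0, dist_self]
          rw [e2, e4]
          have e5 : ∑ i : Fin m,
              dist (Xt 0 ((i.castSucc : Fin (m+1)).castSucc)) (Y ((i.castSucc : Fin (m+1)).castSucc)) ^ 2 = 0 := by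
            refine Finset.sum_eq_zero fun i _ => ?_
            rw [e1 i]; ring
          rw [e5]
          rw [show ((0:ℝ) + |xc (Fin.last m) - g w| ^ 2) + 0 ^ 2
            = |xc (Fin.last m) - g w| ^ 2 from by ring]
          rw [Real.sqrt_sq_eq_abs, abs_abs]
        have hgw : |g w| ≤ ‖w‖ := lipschitz_of_deriv_le hg hg0 hd w
        have hwn : ‖w‖ ≤ ((m:ℝ)+1) * (l*β) := by
          have hlb0 : 0 ≤ l * β := by positivity
          rw [EuclideanSpace.norm_eq]
          have hsum : ∑ i : Fin m, ‖w i‖^2 ≤ (((m:ℝ)+1) * (l*β))^2 := by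
            have hsum1 : ∑ i : Fin m, ‖w i‖^2 ≤ ∑ _i : Fin m, (l*β)^2 := by
              refine Finset.sum_le_sum fun i _ => ?_
              have h1 := hxc0 i.castSucc
              have h2 := hxcβ i.castSucc
              have h3 : ‖w i‖ = xc i.castSucc := by
                rw [hw]; exact abs_of_nonneg h1
              rw [h3]; nlinarith
            have hsum2 : ∑ _i : Fin m, (l*β)^2 = (m:ℝ) * (l*β)^2 := by
              rw [Finset.sum_const, Finset.card_univ, Fintype.card_fin, nsmul_eq_mul]
            have hm0 : (0:ℝ) ≤ (m:ℝ) := Nat.cast_nonneg m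
            nlinarith
          calc Real.sqrt (∑ i : Fin m, ‖w i‖^2) ≤ Real.sqrt ((((m:ℝ)+1) * (l*β))^2) :=
                Real.sqrt_le_sqrt hsum
            _ = ((m:ℝ)+1) * (l*β) := Real.sqrt_sq (by positivity)
        have hxlast : |xc (Fin.last m)| ≤ l * β := by
          rw [abs_of_nonneg (hxc0 _)]; exact hxcβ _
        have hmβ : ((m:ℝ)+1) * (l*β) = l/4 := by
          have : ((m:ℝ)+1) * (l*β) = l * (((m:ℝ)+1) * β) := by ring
          rw [this, hβeq]; ring
        have hlβ : l * β ≤ l/4 := by nlinarith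
        calc ρ 0 ≤ dist (Xt 0) Y := infDist_le_dist_of_mem hYmem
          _ = |xc (Fin.last m) - g w| := hdist
          _ ≤ |xc (Fin.last m)| + |g w| := abs_sub _ _
          _ ≤ l/2 := by
              have := hgw.trans hwn
              rw [hmβ] at this
              linarith
      set rstar : ℝ := l * y (Fin.last (m+1)) with hrstar
      have hrstar1 : l ≤ rstar := by rw [hrstar]; nlinarith
      have hrstar2 : rstar ≤ 3/2 * l := by rw [hrstar]; nlinarith
      have hrstar0 : 0 ≤ rstar := by linarith
      have hmem : rstar ∈ Set.Icc (ρ 0) (ρ rstar) := ⟨by linarith, hρlow rstar hrstar0⟩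
      obtain ⟨t₀, ht₀mem, ht₀⟩ := intermediate_value_Icc hrstar0 hρcont.continuousOn hmem
      set X : EuclideanSpace ℝ (Fin (m+2)) := Xt t₀ with hX
      have hrX : rGamma m g X = rstar := ht₀
      have ht₀0 : 0 ≤ t₀ := ht₀mem.1
      have ht₀2 : t₀ ≤ 3/2 * l := le_trans ht₀mem.2 hrstar2
      have hXnorm : ‖X‖ < 2 * l := by
        have hcoord : ∑ i : Fin (m+2), ‖X i‖^2 ≤ ((m:ℝ)+1) * (l*β)^2 + t₀^2 := by
          rw [Fin.sum_univ_castSucc]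
          have h1 : ∀ i : Fin (m+1), ‖X i.castSucc‖^2 ≤ (l*β)^2 := by
            intro i
            have e : X i.castSucc = xc i := hXtcs t₀ i
            rw [e, Real.norm_eq_abs, abs_of_nonneg (hxc0 i)]
            have h2 := hxc0 i
            have h3 := hxcβ i
            nlinarith
          have h4 : ‖X (Fin.last (m+1))‖^2 = t₀^2 := by
            have h4' : X (Fin.last (m+1)) = t₀ := hXtlast t₀
            rw [h4', Real.norm_eq_abs, sq_abs]
          rw [h4]
          have h5 : ∑ i : Fin (m+1), ‖X i.castSucc‖^2 ≤ ((m:ℝ)+1) * (l*β)^2 := by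
            calc ∑ i : Fin (m+1), ‖X i.castSucc‖^2 ≤ ∑ _i : Fin (m+1), (l*β)^2 :=
                  Finset.sum_le_sum fun i _ => h1 i
              _ = ((m:ℝ)+1) * (l*β)^2 := by
                  rw [Finset.sum_const, Finset.card_univ, Fintype.card_fin, nsmul_eq_mul]
                  push_cast; ring
          linarith
        rw [EuclideanSpace.norm_eq]
        rw [show (2*l) = Real.sqrt ((2*l)^2) from (Real.sqrt_sq (by linarith)).symm]
        apply Real.sqrt_lt_sqrt (by positivity)
        have hlb2 : ((m:ℝ)+1) * (l*β)^2 ≤ l^2/16 := by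
          have h6 : ((m:ℝ)+1) * β^2 ≤ 1/16 := by nlinarith [Nat.cast_nonneg (α := ℝ) m]
          nlinarith [sq_nonneg l]
        nlinarith [sq_nonneg t₀]
      have hident : (T cc) σ = polyVal m k g a0 X - polyVal m k g aZ X := by
        have hTapp : (T cc) σ
            = ∑ ν : Fin (m+2) → Fin (k+1), cc ν * ∏ i, (v i (σ i)) ^ ((ν i : ℕ)) := rfl
        have hL : (T cc) σ = ∑ pr : Fin (k+1) × (Fin (m+1) → Fin (k+1)),
            cc (Fin.snoc pr.2 pr.1) * ∏ i : Fin (m+2),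
              (v i (σ i)) ^ (((Fin.snoc pr.2 pr.1 : Fin (m+2) → Fin (k+1)) i : ℕ)) := by
          rw [hTapp]
          exact (Fintype.sum_equiv (Fin.snocEquiv (fun _ => Fin (k+1)))
            (fun pr => cc (Fin.snoc pr.2 pr.1) * ∏ i : Fin (m+2),
              (v i (σ i)) ^ (((Fin.snoc pr.2 pr.1 : Fin (m+2) → Fin (k+1)) i : ℕ)))
            (fun ν => cc ν * ∏ i, (v i (σ i)) ^ ((ν i : ℕ)))
            (fun pr => by simp [Fin.snocEquiv])).symm
        rw [hL, Fintype.sum_prod_type, Finset.sum_comm]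
        have hR : polyVal m k g a0 X - polyVal m k g aZ X
            = ∑ μ : Fin (m+1) → Fin (k+1), ∑ j : Fin (k+1),
              (a0 (fun i => (μ i : ℕ)) (j:ℕ) - aZ (fun i => (μ i:ℕ)) (j:ℕ)) *
                (∏ i, (X i.castSucc)^((μ i:ℕ))) * (rGamma m g X)^(j:ℕ) := by
          rw [polyVal, polyVal, ← Finset.sum_sub_distrib]
          refine Finset.sum_congr rfl fun μ _ => ?_
          rw [← Finset.sum_sub_distrib]
          rw [Fin.sum_univ_eq_sum_range (fun j =>
            (a0 (fun i => (μ i : ℕ)) j - aZ (fun i => (μ i:ℕ)) j) *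
              (∏ i, (X i.castSucc)^((μ i:ℕ))) * (rGamma m g X)^j) (k+1)]
          refine Finset.sum_congr rfl fun j _ => ?_
          ring
        rw [hR]
        refine Finset.sum_congr rfl fun μ _ => Finset.sum_congr rfl fun j _ => ?_
        -- pointwise identity
        have hsnc : ∀ (i : Fin (m+1)),
            ((Fin.snoc μ j : Fin (m+2) → Fin (k+1)) i.castSucc) = μ i := by
          intro i; rw [Fin.snoc_castSucc]
        have hsnl : ((Fin.snoc μ j : Fin (m+2) → Fin (k+1)) (Fin.last (m+1))) = j :=
          Fin.snoc_last _ _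
        have hccval : cc (Fin.snoc μ j)
            = (a0 (fun i => (μ i : ℕ)) (j:ℕ) - aZ (fun i => (μ i:ℕ)) (j:ℕ)) *
              l ^ ((∑ i, (μ i:ℕ)) + (j:ℕ)) := by
          rw [hccdef]
          dsimp only
          have h1 : (fun i : Fin (m+1) =>
              (((Fin.snoc μ j : Fin (m+2) → Fin (k+1)) i.castSucc) : ℕ)) = fun i => (μ i : ℕ) := by
            funext i; rw [hsnc i]
          have h2 : ∑ i : Fin (m+2), (((Fin.snoc μ j : Fin (m+2) → Fin (k+1)) i) : ℕ)
              = (∑ i, (μ i:ℕ)) + (j:ℕ) := by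
            rw [Fin.sum_univ_castSucc]
            rw [hsnl]
            congr 1
            refine Finset.sum_congr rfl fun i _ => ?_
            rw [hsnc i]
          rw [h1, h2, hsnl]
        have hprod : ∏ i : Fin (m+2),
            (v i (σ i)) ^ (((Fin.snoc μ j : Fin (m+2) → Fin (k+1)) i : ℕ))
            = (∏ i : Fin (m+1), (y i.castSucc) ^ ((μ i:ℕ))) * (y (Fin.last (m+1)))^(j:ℕ) := by
          rw [Fin.prod_univ_castSucc, hsnl]
          congr 1
          refine Finset.prod_congr rfl fun i _ => ?_
          rw [hsnc i]
        have hXP : ∏ i : Fin (m+1), (X i.castSucc)^((μ i:ℕ))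
            = l^(∑ i, (μ i:ℕ)) * ∏ i : Fin (m+1), (y i.castSucc)^((μ i:ℕ)) := by
          rw [← Finset.prod_pow_eq_pow_sum, ← Finset.prod_mul_distrib]
          refine Finset.prod_congr rfl fun i _ => ?_
          have e : X i.castSucc = l * y i.castSucc := hXtcs t₀ i
          rw [e, mul_pow]
        have hrpow : (rGamma m g X)^(j:ℕ) = l^(j:ℕ) * (y (Fin.last (m+1)))^(j:ℕ) := by
          rw [hrX, hrstar, mul_pow]
        rw [hccval, hprod, hXP, hrpow, pow_add]
        ring
      rw [hident]
      exact hkey X hXnorm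
    intro μ j hμj
    have hμik : ∀ i, μ i ≤ k := fun i =>
      le_trans (le_trans (Finset.single_le_sum (fun i _ => Nat.zero_le _) (Finset.mem_univ i))
        (Nat.le_add_right _ j)) hμj
    have hjk : j ≤ k := le_trans (Nat.le_add_left _ _) hμj
    set ν : Fin (m+2) → Fin (k+1) :=
      Fin.snoc (fun i => (⟨μ i, Nat.lt_succ_of_le (hμik i)⟩ : Fin (k+1)))
        (⟨j, Nat.lt_succ_of_le hjk⟩) with hν
    have hν1 : (fun i : Fin (m+1) => ((ν i.castSucc : Fin (k+1)) : ℕ)) = μ := by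
      funext i
      rw [hν, Fin.snoc_castSucc]
    have hν2 : ((ν (Fin.last (m+1)) : Fin (k+1)) : ℕ) = j := by
      rw [hν, Fin.snoc_last]
    have hν3 : ∑ i, ((ν i : Fin (k+1)) : ℕ) = (∑ i, μ i) + j := by
      rw [Fin.sum_univ_castSucc, hν]
      simp only [Fin.snoc_castSucc, Fin.snoc_last]
    have hccν : cc ν = (a0 μ j - aZ μ j) * l ^ ((∑ i, μ i) + j) := by
      rw [hccdef]
      dsimp only
      rw [hν1, hν2, hν3]
    have h1 : |cc ν| ≤ ‖cc‖ := by
      have h := norm_le_pi_norm cc ν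
      rwa [Real.norm_eq_abs] at h
    have h2 : ‖T cc‖ ≤ C₁ * l ^ ((k:ℝ)+α) := by
      rw [pi_norm_le_iff_of_nonneg (by positivity)]
      intro σ
      rw [Real.norm_eq_abs]
      exact hTσ σ
    have h3 := hC₂ cc
    have h4 : |cc ν| = |a0 μ j - aZ μ j| * l ^ ((∑ i, μ i) + j) := by
      rw [hccν, abs_mul, abs_of_nonneg (by positivity : (0:ℝ) ≤ l ^ ((∑ i, μ i) + j))]
    have habs : |a0 μ j - aZ μ j| * l ^ ((∑ i, μ i) + j) ≤ C₂ * (C₁ * l ^ ((k:ℝ)+α)) := by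
      rw [← h4]
      calc |cc ν| ≤ ‖cc‖ := h1
        _ ≤ C₂ * ‖T cc‖ := h3
        _ ≤ C₂ * (C₁ * l ^ ((k:ℝ)+α)) := by nlinarith [norm_nonneg (T cc)]
    have hld : (0:ℝ) < l ^ ((∑ i, μ i) + j) := by positivity
    have hfin : |a0 μ j - aZ μ j|
        ≤ (C₂ * C₁) * l ^ ((k:ℝ) - (((∑ i, μ i) + j : ℕ) : ℝ) + α) := by
      rw [show (k:ℝ) - (((∑ i, μ i) + j : ℕ) : ℝ) + α
        = ((k:ℝ)+α) - (((∑ i, μ i) + j : ℕ) : ℝ) from by ring]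
      rw [Real.rpow_sub hZ0, Real.rpow_natCast]
      rw [mul_div_assoc' (C₂ * C₁), le_div_iff₀ hld]
      calc |a0 μ j - aZ μ j| * l ^ ((∑ i, μ i) + j)
          ≤ C₂ * (C₁ * l ^ ((k:ℝ)+α)) := habs
        _ = C₂ * C₁ * l ^ ((k:ℝ)+α) := by ring
    calc |a0 μ j - aZ μ j|
        ≤ (C₂ * C₁) * l ^ ((k:ℝ) - (((∑ i, μ i) + j : ℕ) : ℝ) + α) := hfin
      _ ≤ (C₁ + C₂ * C₁) * l ^ ((k:ℝ) - (((∑ i, μ i) + j : ℕ) : ℝ) + α) := by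
          have hp := Real.rpow_pos_of_pos hZ0 ((k:ℝ) - (((∑ i, μ i) + j : ℕ) : ℝ) + α)
          nlinarith
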